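/- The map h(x) = (1,…,1) − x restricts to a bijection from the star S = ⋃_{σ ∈ S_p} convexHull{v_0^σ,…,v_{p−1}^σ} of the vertex 0 onto the star S* = ⋃_{σ ∈ S_p} convexHull{v_1^σ,…,v_p^σ} of the vertex (1,…,1), carrying each face convexHull{v_0^σ,…,v_{p−1}^σ} onto the face convexHull{v_1^{σ∘ρ},…,v_p^{σ∘ρ}}, where ρ(i) = p+1−i is the reversal permutation; hence the two stars are simplicially isomorphic. -/
import Mathlib


open Set

/-- The vertex `v_k^σ = e_{σ(1)} + ⋯ + e_{σ(k)}` of the simplex `K_σ`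
(0-indexed: the sum of `e_{σ(i)}` over the first `k` indices `i`). -/
def cubeVtx (p : ℕ) (σ : Equiv.Perm (Fin p)) (k : ℕ) : Fin p → ℝ :=
  ∑ i ∈ Finset.univ.filter fun i : Fin p => (i : ℕ) < k, Pi.single (σ i) 1

/-- The simplex `K_σ`, the convex hull of the `p+1` points `v_0^σ, …, v_p^σ`. -/
def Ksimp (p : ℕ) (σ : Equiv.Perm (Fin p)) : Set (Fin p → ℝ) :=
  convexHull ℝ {x | ∃ k ≤ p, x = cubeVtx p σ k}

/-- The unit cube `[0,1]^p`. -/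
def unitCube (p : ℕ) : Set (Fin p → ℝ) :=
  {x | ∀ i, x i ∈ Icc (0 : ℝ) 1}

/-- The star of the vertex `0`. -/
def starZero (p : ℕ) : Set (Fin p → ℝ) :=
  ⋃ σ : Equiv.Perm (Fin p), convexHull ℝ {x | ∃ k < p, x = cubeVtx p σ k}

/-- The star of the vertex `(1,…,1)`. -/
def starOne (p : ℕ) : Set (Fin p → ℝ) :=
  ⋃ σ : Equiv.Perm (Fin p), convexHull ℝ {x | ∃ k, 1 ≤ k ∧ k ≤ p ∧ x = cubeVtx p σ k}

lemma cubeVtx_apply (p : ℕ) (σ : Equiv.Perm (Fin p)) (k : ℕ) (j : Fin p) :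
    cubeVtx p σ k j = if ((σ.symm j : Fin p) : ℕ) < k then 1 else 0 := by
  unfold cubeVtx
  rw [Finset.sum_apply]
  have h : ∀ i : Fin p, (Pi.single (σ i) (1:ℝ) : Fin p → ℝ) j
      = if i = σ.symm j then (1:ℝ) else 0 := by
    intro i
    rw [Pi.single_apply]
    congr 1
    simp only [eq_iff_iff]
    constructor <;> (intro h; simp [h])
  simp_rw [h]
  rw [Finset.sum_ite_eq' (Finset.univ.filter fun i : Fin p => (i:ℕ) < k) (σ.symm j)]
  simp

lemma cubeVtx_flip (p : ℕ) (σ : Equiv.Perm (Fin p)) (k : ℕ) (hk : k ≤ p) :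
    (fun i => 1 - cubeVtx p σ k i) = cubeVtx p (σ * Fin.revPerm) (p - k) := by
  funext j
  simp only [cubeVtx_apply]
  have h0 : (σ * Fin.revPerm).symm j = Fin.rev (σ.symm j) := rfl
  have h1 : ((σ * Fin.revPerm).symm j : ℕ) = p - 1 - (σ.symm j : ℕ) := by
    rw [h0, Fin.val_rev]; omega
  rw [h1]
  have h2 : (σ.symm j : ℕ) < p := (σ.symm j).isLt
  by_cases hc : (σ.symm j : ℕ) < k
  · rw [if_pos hc, if_neg (by omega)]; ring
  · rw [if_neg hc, if_pos (by omega)]; ring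

lemma flip_eq_affine (p : ℕ) :
    (fun x : Fin p → ℝ => fun i => 1 - x i)
      = ⇑(AffineEquiv.constVSub ℝ (1 : Fin p → ℝ)) := by
  funext x
  rfl

lemma flip_image_convexHull (p : ℕ) (s : Set (Fin p → ℝ)) :
    (fun x : Fin p → ℝ => fun i => 1 - x i) '' convexHull ℝ s
      = convexHull ℝ ((fun x : Fin p → ℝ => fun i => 1 - x i) '' s) := by
  rw [flip_eq_affine]
  exact (AffineEquiv.constVSub ℝ (1 : Fin p → ℝ)).toAffineMap.image_convexHull s

lemma flip_image_vtx (p : ℕ) (hp : 1 ≤ p) (σ : Equiv.Perm (Fin p)) :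
    (fun x : Fin p → ℝ => fun i => 1 - x i) '' {x | ∃ k < p, x = cubeVtx p σ k}
      = {x | ∃ k, 1 ≤ k ∧ k ≤ p ∧ x = cubeVtx p (σ * Fin.revPerm) k} := by
  ext y
  constructor
  · rintro ⟨x, ⟨k, hk, rfl⟩, rfl⟩
    exact ⟨p - k, by omega, by omega, cubeVtx_flip p σ k (le_of_lt hk)⟩
  · rintro ⟨k, hk1, hk2, rfl⟩
    refine ⟨cubeVtx p σ (p - k), ⟨p - k, by omega, rfl⟩, ?_⟩
    show (fun i => 1 - cubeVtx p σ (p - k) i) = _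
    rw [cubeVtx_flip p σ (p - k) (by omega)]
    have hpp : p - (p - k) = k := by omega
    rw [hpp]

/-- `h(x) = (1,…,1) - x` restricts to a bijection from the star `S` of `0` onto the
star `S*` of `(1,…,1)`, carrying the face `convexHull {v_0^σ,…,v_{p-1}^σ}` onto the face
`convexHull {v_1^{σ∘ρ},…,v_p^{σ∘ρ}}`, `ρ = Fin.revPerm`; hence the two stars are
simplicially isomorphic. -/
theorem central_symmetry_star_bijection (p : ℕ) (hp : 1 ≤ p) :
    Set.BijOn (fun x : Fin p → ℝ => fun i => 1 - x i) (starZero p) (starOne p) ∧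
    ∀ σ : Equiv.Perm (Fin p),
      (fun x : Fin p → ℝ => fun i => 1 - x i) ''
          (convexHull ℝ {x | ∃ k < p, x = cubeVtx p σ k}) =
        convexHull ℝ
          {x | ∃ k, 1 ≤ k ∧ k ≤ p ∧ x = cubeVtx p (σ * Fin.revPerm) k} := by
  have face : ∀ σ : Equiv.Perm (Fin p),
      (fun x : Fin p → ℝ => fun i => 1 - x i) ''
          (convexHull ℝ {x | ∃ k < p, x = cubeVtx p σ k}) =
        convexHull ℝ
          {x | ∃ k, 1 ≤ k ∧ k ≤ p ∧ x = cubeVtx p (σ * Fin.revPerm) k} := by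
    intro σ
    rw [flip_image_convexHull, flip_image_vtx p hp σ]
  refine ⟨?_, face⟩
  have hinj : Function.Injective (fun x : Fin p → ℝ => fun i => 1 - x i) := by
    intro x y hxy
    funext i
    have := congrFun hxy i
    simp only at this
    linarith
  have himg : (fun x : Fin p → ℝ => fun i => 1 - x i) '' starZero p = starOne p := by
    rw [starZero, image_iUnion]
    simp_rw [face]
    rw [starOne]
    exact (Equiv.mulRight (Fin.revPerm (n := p))).surjective.iUnion_comp
      (fun τ => convexHull ℝ {x | ∃ k, 1 ≤ k ∧ k ≤ p ∧ x = cubeVtx p τ k})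
  have := (hinj.injOn).bijOn_image (s := starZero p)
  rwa [himg] at this
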